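/- Let G = ([k]+V, E) be the complete bipartite multi-agent graph, F an upwards-closed family over V with blocker B(F), and H = {S ⊆ E : S₁,...,S_k pairwise disjoint and S₁ ∪ ... ∪ S_k ∈ F}. Then the blocker of the upward closure of H is B(H) = {⋃_{v∈B} δ_G(v) : B ∈ B(F)}, where δ_G(v) = [k] × {v}; equivalently, for w ∈ ℝ_+^E, w ∈ P*(H) if and only if the vector z ∈ ℝ_+^V with z(v) = w(δ_G(v)) lies in P*(F). -/

import Mathlib

/-- B is a minimal set intersecting every member of F, i.e. B ∈ B(F). -/
def IsBlockerElem {α : Type*} [DecidableEq α] (F : Finset α → Prop) (B : Finset α) : Prop :=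
  (∀ A, F A → (B ∩ A).Nonempty) ∧
    ∀ B' ⊆ B, (∀ A, F A → (B' ∩ A).Nonempty) → B' = B

/-- S_i = {v : (i,v) ∈ S}. -/
def proj {V : Type*} [Fintype V] [DecidableEq V] {k : ℕ}
    (S : Finset (Fin k × V)) (i : Fin k) : Finset V :=
  Finset.univ.filter (fun v => (i, v) ∈ S)

/-- H = {S ⊆ E : S₁,...,S_k pairwise disjoint and S₁ ∪ ... ∪ S_k ∈ F}. -/
def memH {V : Type*} [Fintype V] [DecidableEq V] (k : ℕ)
    (F : Finset V → Prop) (S : Finset (Fin k × V)) : Prop :=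
  (∀ i j : Fin k, i ≠ j → Disjoint (proj S i) (proj S j)) ∧
    F (Finset.univ.biUnion (fun i => proj S i))

section Aux

variable {V : Type*} [Fintype V] [DecidableEq V] {k : ℕ}

/-- The core of a set of edges: vertices whose full star lies in B'. -/
def core (B' : Finset (Fin k × V)) : Finset V :=
  Finset.univ.filter (fun v => ∀ i : Fin k, (i, v) ∈ B')

/-- The star union of a vertex set. -/
def starOf (B : Finset V) : Finset (Fin k × V) :=
  B.biUnion (fun v => Finset.univ.image (fun i : Fin k => (i, v)))

lemma mem_core {B' : Finset (Fin k × V)} {v : V} :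
    v ∈ core B' ↔ ∀ i : Fin k, (i, v) ∈ B' := by
  simp [core]

lemma mem_starOf {B : Finset V} {p : Fin k × V} : p ∈ starOf B ↔ p.2 ∈ B := by
  constructor
  · intro hp
    simp only [starOf, Finset.mem_biUnion, Finset.mem_image, Finset.mem_univ, true_and] at hp
    obtain ⟨v, hv, i, hi⟩ := hp
    rw [← hi]; exact hv
  · intro hp
    simp only [starOf, Finset.mem_biUnion, Finset.mem_image, Finset.mem_univ, true_and]
    exact ⟨p.2, hp, p.1, rfl⟩

lemma core_starOf (hk : 0 < k) (B : Finset V) : core (starOf (k := k) B) = B := by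
  ext v
  simp only [mem_core, mem_starOf]
  exact ⟨fun h => h ⟨0, hk⟩, fun h _ => h⟩

lemma starOf_core_subset (B' : Finset (Fin k × V)) : starOf (core B') ⊆ B' := by
  intro p hp
  have := (mem_starOf.1 hp)
  have := mem_core.1 this p.1
  simpa using this

lemma starOf_mono {A B : Finset V} (h : A ⊆ B) : starOf (k := k) A ⊆ starOf B := by
  intro p hp
  exact mem_starOf.2 (h (mem_starOf.1 hp))

lemma core_mono {A B : Finset (Fin k × V)} (h : A ⊆ B) : core A ⊆ core B := by
  intro v hv
  exact mem_core.2 fun i => h (mem_core.1 hv i)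

/-- Key lemma: B' intersects every member of H iff its core intersects every member of F. -/
lemma trans_iff (hk : 0 < k) (F : Finset V → Prop) (B' : Finset (Fin k × V)) :
    (∀ S, memH k F S → (B' ∩ S).Nonempty) ↔ (∀ A, F A → (core B' ∩ A).Nonempty) := by
  constructor
  · intro h A hA
    by_contra hne
    rw [Finset.not_nonempty_iff_eq_empty, ← Finset.disjoint_iff_inter_eq_empty,
      Finset.disjoint_left] at hne
    -- every v ∈ A has some color i with (i,v) ∉ B'
    have hch : ∀ v ∈ A, ∃ i : Fin k, (i, v) ∉ B' := by
      intro v hv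
      by_contra hc
      push_neg at hc
      exact hne (mem_core.2 hc) hv
    classical
    set f : V → Fin k := fun v =>
      if h : ∃ i : Fin k, (i, v) ∉ B' then h.choose else ⟨0, hk⟩ with hf
    have hfspec : ∀ v ∈ A, (f v, v) ∉ B' := by
      intro v hv
      have hex := hch v hv
      simp only [hf, dif_pos hex]
      exact hex.choose_spec
    set S : Finset (Fin k × V) := A.image (fun v => (f v, v)) with hS
    have hproj : ∀ i : Fin k, ∀ v : V, v ∈ proj S i ↔ v ∈ A ∧ f v = i := by
      intro i v
      simp only [proj, Finset.mem_filter, Finset.mem_univ, true_and, hS, Finset.mem_image]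
      constructor
      · rintro ⟨a, ha, heq⟩
        obtain ⟨h1, h2⟩ := Prod.mk.injEq .. ▸ heq
        subst h2
        exact ⟨ha, h1⟩
      · rintro ⟨ha, hfv⟩
        exact ⟨v, ha, by rw [hfv]⟩
    have hunion : Finset.univ.biUnion (fun i => proj S i) = A := by
      ext v
      simp only [Finset.mem_biUnion, Finset.mem_univ, true_and, hproj]
      exact ⟨fun ⟨i, hi, _⟩ => hi, fun hv => ⟨f v, hv, rfl⟩⟩
    have hmem : memH k F S := by
      refine ⟨?_, by rw [hunion]; exact hA⟩
      intro i j hij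
      rw [Finset.disjoint_left]
      intro v hvi hvj
      obtain ⟨_, h1⟩ := (hproj i v).1 hvi
      obtain ⟨_, h2⟩ := (hproj j v).1 hvj
      exact hij (h1 ▸ h2 ▸ rfl)
    obtain ⟨p, hp⟩ := h S hmem
    rw [Finset.mem_inter] at hp
    obtain ⟨hpB, hpS⟩ := hp
    rw [hS, Finset.mem_image] at hpS
    obtain ⟨v, hv, heq⟩ := hpS
    exact hfspec v hv (heq ▸ hpB)
  · intro h S hS
    obtain ⟨v, hv⟩ := h _ hS.2
    rw [Finset.mem_inter, Finset.mem_biUnion] at hv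
    obtain ⟨hvc, i, _, hvi⟩ := hv
    have : (i, v) ∈ S := by
      simpa [proj] using hvi
    exact ⟨(i, v), Finset.mem_inter.2 ⟨mem_core.1 hvc i, this⟩⟩

lemma blocker_iff (hk : 0 < k) (F : Finset V → Prop) (B' : Finset (Fin k × V)) :
    IsBlockerElem (memH (V := V) k F) B' ↔
      ∃ B : Finset V, IsBlockerElem F B ∧ B' = starOf B := by
  constructor
  · rintro ⟨htr, hmin⟩
    have htrF : ∀ A, F A → (core B' ∩ A).Nonempty := (trans_iff hk F B').1 htr
    have hstar_tr : ∀ S, memH k F S → (starOf (core B') ∩ S).Nonempty :=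
      (trans_iff hk F _).2 (by rw [core_starOf hk]; exact htrF)
    have heq : starOf (core B') = B' := hmin _ (starOf_core_subset B') hstar_tr
    refine ⟨core B', ⟨htrF, ?_⟩, heq.symm⟩
    intro B'' hsub htr''
    have hstar'' : starOf B'' = B' := by
      refine hmin _ (heq ▸ starOf_mono hsub) ?_
      exact (trans_iff hk F _).2 (by rw [core_starOf hk]; exact htr'')
    have : starOf B'' = starOf (core B') := hstar''.trans heq.symm
    have := congrArg core this
    rwa [core_starOf hk, core_starOf hk] at this
  · rintro ⟨B, ⟨htrF, hminF⟩, rfl⟩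
    constructor
    · exact (trans_iff hk F _).2 (by rw [core_starOf hk]; exact htrF)
    · intro B'' hsub htr''
      have hcore_tr := (trans_iff hk F B'').1 htr''
      have hc_sub : core B'' ⊆ B := by
        have := core_mono hsub
        rwa [core_starOf hk] at this
      have hceq : core B'' = B := hminF _ hc_sub hcore_tr
      refine le_antisymm hsub ?_
      calc starOf B = starOf (core B'') := by rw [hceq]
        _ ⊆ B'' := starOf_core_subset B''

lemma sum_starOf (B : Finset V) (w : Fin k × V → ℝ) :
    ∑ e ∈ starOf (k := k) B, w e = ∑ v ∈ B, ∑ i : Fin k, w (i, v) := by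
  rw [starOf, Finset.sum_biUnion]
  · refine Finset.sum_congr rfl fun v _ => ?_
    rw [Finset.sum_image]
    intro i _ j _ h
    simpa using h
  · intro a _ b _ hab
    simp only [Finset.disjoint_left, Finset.mem_image, Finset.mem_univ, true_and]
    rintro p ⟨i, rfl⟩ ⟨j, hj⟩
    exact hab ((Prod.ext_iff.1 hj).2).symm

end Aux

/-- for an upwards-closed F, the blocker of (the upward closure of)
H consists exactly of the star unions ⋃_{v∈B} δ_G(v) = B × [k] over B ∈ B(F);
equivalently, w ∈ P*(H) iff the vector z(v) = w(δ_G(v)) lies in P*(F). -/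
theorem stmt_19 (V : Type*) [Fintype V] [DecidableEq V] (k : ℕ) (hk : 0 < k)
    (F : Finset V → Prop) (hup : ∀ A B : Finset V, F A → A ⊆ B → F B) :
    (∀ B' : Finset (Fin k × V),
      IsBlockerElem (memH (V := V) k F) B' ↔
        ∃ B : Finset V, IsBlockerElem F B ∧
          B' = B.biUnion (fun v => Finset.univ.image (fun i : Fin k => (i, v)))) ∧
    (∀ w : Fin k × V → ℝ, (∀ e, 0 ≤ w e) →
      ((∀ B' : Finset (Fin k × V),
          IsBlockerElem (memH (V := V) k F) B' → 1 ≤ ∑ e ∈ B', w e) ↔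
        (∀ B : Finset V, IsBlockerElem F B →
          1 ≤ ∑ v ∈ B, ∑ i : Fin k, w (i, v)))) := by
  refine ⟨fun B' => blocker_iff hk F B', ?_⟩
  intro w _
  constructor
  · intro h B hB
    have := h (starOf B) ((blocker_iff hk F _).2 ⟨B, hB, rfl⟩)
    rwa [sum_starOf] at this
  · intro h B' hB'
    obtain ⟨B, hB, rfl⟩ := (blocker_iff hk F B').1 hB'
    rw [sum_starOf]
    exact h B hB
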